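/- arXiv:0909.0991 — 3 statements merged into one kernel-verified Lean document; each statement's English description precedes it below -/
import Mathlib

section
/- For any positive semidefinite matrix S ∈ P_n, the function μ ↦ ⟨Σ(μ), S⟩ (Frobenius inner product) is a negative definite semigroup function on probability measures: for any k, any measures μ_1,…,μ_k with finite moments, and any real c_1,…,c_k with Σ_i c_i = 0, one has Σ_{i,j} c_i c_j ⟨Σ(μ_i + μ_j), S⟩ ≤ 0. -/
open Finset Matrix

noncomputable def meanVec {n : ℕ} (μ : (Fin n → ℝ) →₀ ℝ) : Fin n → ℝ :=
  fun i => ∑ p ∈ μ.support, μ p * p i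

noncomputable def varMat {n : ℕ} (μ : (Fin n → ℝ) →₀ ℝ) : Matrix (Fin n) (Fin n) ℝ :=
  Matrix.of fun i j =>
    (∑ p ∈ μ.support, μ p * p i * p j) - meanVec μ i * meanVec μ j

lemma support_sum_add {n : ℕ} (μ ν : (Fin n → ℝ) →₀ ℝ) (f : (Fin n → ℝ) → ℝ) :
    ∑ p ∈ (μ + ν).support, (μ + ν) p * f p
      = ∑ p ∈ μ.support, μ p * f p + ∑ p ∈ ν.support, ν p * f p := by
  have h : ∀ ρ : (Fin n → ℝ) →₀ ℝ,
      ∑ p ∈ ρ.support, ρ p * f p = ρ.sum (fun p m => m * f p) := fun ρ => rfl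
  rw [h, h, h]
  exact Finsupp.sum_add_index' (fun p => zero_mul _) (fun p m₁ m₂ => add_mul _ _ _)

lemma meanVec_add {n : ℕ} (μ ν : (Fin n → ℝ) →₀ ℝ) (a : Fin n) :
    meanVec (μ + ν) a = meanVec μ a + meanVec ν a :=
  support_sum_add μ ν (fun p => p a)

lemma secondMoment_add {n : ℕ} (μ ν : (Fin n → ℝ) →₀ ℝ) (a b : Fin n) :
    ∑ p ∈ (μ + ν).support, (μ + ν) p * p a * p b
      = (∑ p ∈ μ.support, μ p * p a * p b) + ∑ p ∈ ν.support, ν p * p a * p b := by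
  simpa only [mul_assoc] using support_sum_add μ ν (fun p => p a * p b)

lemma trace_transpose_mul {n : ℕ} (A S : Matrix (Fin n) (Fin n) ℝ) :
    (Aᵀ * S).trace = ∑ a, ∑ b, A a b * S a b := by
  rw [Matrix.trace]
  simp only [Matrix.diag, Matrix.mul_apply, Matrix.transpose_apply]
  exact Finset.sum_comm

lemma sum_sum_comm4 {α β γ δ : Type*} [Fintype α] [Fintype β] [Fintype γ] [Fintype δ]
    (X : α → β → γ → δ → ℝ) :
    ∑ i, ∑ j, ∑ a, ∑ b, X i j a b = ∑ a, ∑ b, ∑ i, ∑ j, X i j a b := by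
  calc ∑ i, ∑ j, ∑ a, ∑ b, X i j a b
      = ∑ i, ∑ a, ∑ j, ∑ b, X i j a b :=
        Finset.sum_congr rfl fun i _ => Finset.sum_comm
    _ = ∑ a, ∑ i, ∑ j, ∑ b, X i j a b := Finset.sum_comm
    _ = ∑ a, ∑ i, ∑ b, ∑ j, X i j a b :=
        Finset.sum_congr rfl fun a _ => Finset.sum_congr rfl fun i _ => Finset.sum_comm
    _ = ∑ a, ∑ b, ∑ i, ∑ j, X i j a b :=
        Finset.sum_congr rfl fun a _ => Finset.sum_comm

/-- μ ↦ ⟨Σ(μ), S⟩ is a negative definite semigroup function on probability measures. -/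
theorem frobenius_varMat_negDef {n k : ℕ} (S : Matrix (Fin n) (Fin n) ℝ)
    (hS : S.PosSemidef) (μ : Fin k → ((Fin n → ℝ) →₀ ℝ))
    (hpos : ∀ i p, 0 ≤ μ i p) (hprob : ∀ i, ∑ p ∈ (μ i).support, μ i p = 1)
    (c : Fin k → ℝ) (hc : ∑ i, c i = 0) :
    ∑ i, ∑ j, c i * c j * ((varMat (μ i + μ j))ᵀ * S).trace ≤ 0 := by
  set m : Fin k → Fin n → ℝ := fun i => meanVec (μ i) with hm
  set q : Fin k → ℝ :=
    fun i => ∑ a, ∑ b, (∑ p ∈ (μ i).support, μ i p * p a * p b) * S a b with hq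
  set B : Fin k → Fin k → ℝ :=
    fun i j => ∑ a, ∑ b, m i a * S a b * m j b with hB
  have ht : ∀ i j, ((varMat (μ i + μ j))ᵀ * S).trace
      = q i + q j - B i i - B i j - B j i - B j j := by
    intro i j
    rw [trace_transpose_mul]
    have hentry : ∀ a b, varMat (μ i + μ j) a b * S a b
        = (∑ p ∈ (μ i).support, μ i p * p a * p b) * S a b
          + (∑ p ∈ (μ j).support, μ j p * p a * p b) * S a b
          - m i a * S a b * m i b - m i a * S a b * m j b
          - m j a * S a b * m i b - m j a * S a b * m j b := by
      intro a b
      show ((∑ p ∈ (μ i + μ j).support, (μ i + μ j) p * p a * p b)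
          - meanVec (μ i + μ j) a * meanVec (μ i + μ j) b) * S a b = _
      rw [secondMoment_add, meanVec_add, meanVec_add]
      ring
    simp only [hentry, Finset.sum_sub_distrib, Finset.sum_add_distrib]
    rfl
  simp only [ht]
  have h1 : ∀ f : Fin k → ℝ, ∑ i, ∑ j, c i * c j * f i = 0 := by
    intro f
    have h' : ∀ i, ∑ j, c i * c j * f i = (c i * f i) * ∑ j, c j := by
      intro i; rw [Finset.mul_sum]; exact Finset.sum_congr rfl fun j _ => by ring
    simp [h', hc]
  have h2 : ∀ f : Fin k → ℝ, ∑ i, ∑ j, c i * c j * f j = 0 := by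
    intro f
    rw [Finset.sum_comm]
    calc ∑ j, ∑ i, c i * c j * f j
        = ∑ j, ∑ i, c j * c i * f j :=
          Finset.sum_congr rfl fun j _ => Finset.sum_congr rfl fun i _ => by ring
      _ = 0 := h1 f
  set v : Fin n → ℝ := fun a => ∑ i, c i * m i a with hv
  have hterm : ∀ i j, c i * c j * B i j
      = ∑ a, ∑ b, (c i * m i a) * S a b * (c j * m j b) := by
    intro i j
    simp only [hB, Finset.mul_sum]
    exact Finset.sum_congr rfl fun a _ => Finset.sum_congr rfl fun b _ => by ring
  have hab : ∀ a b, v a * S a b * v b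
      = ∑ i, ∑ j, (c i * m i a) * S a b * (c j * m j b) := by
    intro a b
    simp only [hv, Finset.sum_mul, Finset.mul_sum]
    rw [Finset.sum_comm]
  have h3 : ∑ i, ∑ j, c i * c j * B i j = ∑ a, ∑ b, v a * S a b * v b := by
    simp only [hterm, hab]
    exact sum_sum_comm4 _
  have h4 : ∑ i, ∑ j, c i * c j * B j i = ∑ a, ∑ b, v a * S a b * v b := by
    rw [← h3, Finset.sum_comm]
    exact Finset.sum_congr rfl fun i _ => Finset.sum_congr rfl fun j _ => by ring
  have hpsd : 0 ≤ ∑ a, ∑ b, v a * S a b * v b := by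
    have h := hS.dotProduct_mulVec_nonneg v
    simpa [dotProduct, Matrix.mulVec, Finset.mul_sum, mul_assoc] using h
  have key : ∑ i, ∑ j, c i * c j * (q i + q j - B i i - B i j - B j i - B j j)
      = - (2 * ∑ a, ∑ b, v a * S a b * v b) := by
    have expand : ∀ i j, c i * c j * (q i + q j - B i i - B i j - B j i - B j j)
        = (c i * c j * (q i - B i i)) + (c i * c j * (q j - B j j))
          - c i * c j * B i j - c i * c j * B j i := by intro i j; ring
    simp only [expand, Finset.sum_sub_distrib, Finset.sum_add_distrib,
      h1 (fun i => q i - B i i), h2 (fun j => q j - B j j), h3, h4]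
    ring
  rw [key]
  linarith
end

section
/- Let A be an n×n real symmetric positive semidefinite matrix with eigenvalues λ_1,…,λ_n, all satisfying λ_j < 1. Define d_k = (1/2) Σ_{j=1}^n λ_j^k for k ≥ 1, c_0 = 1, and c_k = (1/k) Σ_{r=0}^{k-1} d_{k-r} c_r for k ≥ 1. Then the series Σ_{k=0}^∞ (-1)^k c_k converges, and its value equals Π_{j=1}^n (1 + λ_j)^{-1/2} = det(I + A)^{-1/2}. -/
open Finset Matrix

namespace AltDetAux

/-! ### The central binomial coefficient sequence `a k = centralBinom k / 4^k` -/

noncomputable def a (k : ℕ) : ℝ := (Nat.centralBinom k : ℝ) / 4 ^ k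

lemma a_zero : a 0 = 1 := by simp [a]

lemma a_one : a 1 = 1 / 2 := by simp [a, Nat.centralBinom]; norm_num

lemma a_succ (k : ℕ) : a (k + 1) = a k * (2 * k + 1) / (2 * k + 2) := by
  have h := Nat.succ_mul_centralBinom_succ k
  have h' : ((k : ℝ) + 1) * (Nat.centralBinom (k + 1) : ℝ)
      = 2 * (2 * k + 1) * (Nat.centralBinom k : ℝ) := by
    exact_mod_cast congrArg (Nat.cast : ℕ → ℝ) h
  have hk : ((k : ℝ) + 1) ≠ 0 := by positivity
  have hcb : (Nat.centralBinom (k+1) : ℝ)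
      = 2 * (2 * (k:ℝ) + 1) * (Nat.centralBinom k) / ((k:ℝ) + 1) := by
    field_simp
    linarith [h']
  unfold a
  rw [hcb, pow_succ]
  field_simp
  ring

lemma a_nonneg (k : ℕ) : 0 ≤ a k := by
  unfold a; positivity

lemma a_antitone (k : ℕ) : a (k + 1) ≤ a k := by
  rw [a_succ]
  have h1 : (0:ℝ) < 2 * k + 2 := by positivity
  rw [div_le_iff₀ h1]
  nlinarith [a_nonneg k]

lemma a_le_one (k : ℕ) : a k ≤ 1 := by
  induction k with
  | zero => simp [a_zero]
  | succ n ih => exact le_trans (a_antitone n) ih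

lemma sum_a (k : ℕ) : ∑ r ∈ range (k + 1), a r = 2 * ((k:ℝ) + 1) * a (k + 1) := by
  induction k with
  | zero => simp [a_zero, a_succ]
  | succ n ih =>
    rw [Finset.sum_range_succ, ih, a_succ (n+1)]
    push_cast
    field_simp

/-! ### The recursion predicate and its canonical solution -/

def IsRec (d c : ℕ → ℝ) : Prop :=
  c 0 = 1 ∧ ∀ k : ℕ, ((k : ℝ) + 1) * c (k + 1) = ∑ r ∈ range (k + 1), d (k + 1 - r) * c r

lemma IsRec.unique {d c₁ c₂ : ℕ → ℝ} (h₁ : IsRec d c₁) (h₂ : IsRec d c₂) : c₁ = c₂ := by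
  funext k
  induction k using Nat.strong_induction_on with
  | _ k ih =>
    match k with
    | 0 => rw [h₁.1, h₂.1]
    | k + 1 =>
      have hk : ((k : ℝ) + 1) ≠ 0 := by positivity
      have e1 := h₁.2 k
      have e2 := h₂.2 k
      have heq : ∑ r ∈ range (k + 1), d (k + 1 - r) * c₁ r
          = ∑ r ∈ range (k + 1), d (k + 1 - r) * c₂ r := by
        apply Finset.sum_congr rfl
        intro r hr
        rw [ih r (Finset.mem_range.mp hr)]
      rw [heq] at e1
      exact mul_left_cancel₀ hk (e1.trans e2.symm)

noncomputable def sol (d : ℕ → ℝ) : ℕ → ℝ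
  | 0 => 1
  | k + 1 => (1 / ((k : ℝ) + 1)) *
      ∑ r ∈ (Finset.range (k + 1)).attach, d (k + 1 - (r : ℕ)) * sol d r
  decreasing_by exact Finset.mem_range.mp r.2

lemma isRec_sol (d : ℕ → ℝ) : IsRec d (sol d) := by
  constructor
  · rw [sol]
  · intro k
    rw [sol]
    rw [Finset.sum_attach (range (k+1)) (fun r => d (k + 1 - r) * sol d r)]
    have hk : ((k : ℝ) + 1) ≠ 0 := by positivity
    field_simp

/-! ### Convolution of sequences -/

noncomputable def conv (p q : ℕ → ℝ) (k : ℕ) : ℝ := ∑ i ∈ range (k + 1), p i * q (k - i)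

lemma conv_comm (p q : ℕ → ℝ) (k : ℕ) : conv p q k = conv q p k := by
  unfold conv
  rw [← Finset.sum_range_reflect]
  apply Finset.sum_congr rfl
  intro i hi
  rw [Finset.mem_range] at hi
  rw [show k + 1 - 1 - i = k - i from by omega, show k - (k - i) = i from by omega, mul_comm]

set_option linter.unnecessarySeqFocus false in
lemma key {p dp : ℕ → ℝ} (q : ℕ → ℝ)
    (hp : ∀ k : ℕ, ((k : ℝ) + 1) * p (k + 1) = ∑ r ∈ range (k + 1), dp (k + 1 - r) * p r)
    (k : ℕ) :
    ∑ i ∈ range (k + 2), (i : ℝ) * p i * q (k + 1 - i)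
      = ∑ r ∈ range (k + 1), dp (k + 1 - r) * conv p q r := by
  have step1 : ∀ i ∈ range (k + 2),
      (i : ℝ) * p i * q (k + 1 - i)
        = ∑ s ∈ range i, dp (i - s) * p s * q (k + 1 - i) := by
    intro i _
    match i with
    | 0 => simp
    | m + 1 =>
      rw [← Finset.sum_mul, ← hp m]
      push_cast
      ring
  rw [Finset.sum_congr rfl step1]
  unfold conv
  simp only [Finset.mul_sum]
  rw [Finset.sum_sigma', Finset.sum_sigma']
  apply Finset.sum_nbij' (fun x => (⟨k + 1 - x.1 + x.2, x.2⟩ : (_ : ℕ) × ℕ))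
    (fun x => (⟨k + 1 - x.1 + x.2, x.2⟩ : (_ : ℕ) × ℕ))
  · intro x hx
    simp only [Finset.mem_sigma, Finset.mem_range] at hx ⊢
    omega
  · intro x hx
    simp only [Finset.mem_sigma, Finset.mem_range] at hx ⊢
    omega
  · intro x hx
    simp only [Finset.mem_sigma, Finset.mem_range] at hx
    ext <;> simp <;> omega
  · intro x hx
    simp only [Finset.mem_sigma, Finset.mem_range] at hx
    ext <;> simp <;> omega
  · intro x hx
    simp only [Finset.mem_sigma, Finset.mem_range] at hx
    have h1 : x.1 - x.2 = k + 1 - (k + 1 - x.1 + x.2) := by omega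
    have h2 : k + 1 - x.1 = (k + 1 - x.1 + x.2) - x.2 := by omega
    rw [← h1, ← h2]
    ring

lemma IsRec.conv {dp dq p q : ℕ → ℝ} (hp : IsRec dp p) (hq : IsRec dq q) :
    IsRec (fun m => dp m + dq m) (AltDetAux.conv p q) := by
  constructor
  · simp [AltDetAux.conv, hp.1, hq.1]
  · intro k
    have expand : ((k : ℝ) + 1) * AltDetAux.conv p q (k + 1)
        = (∑ i ∈ range (k + 2), (i : ℝ) * p i * q (k + 1 - i))
          + (∑ i ∈ range (k + 2), (i : ℝ) * q i * p (k + 1 - i)) := by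
      unfold AltDetAux.conv
      rw [Finset.mul_sum,
        ← Finset.sum_range_reflect (fun i => (i : ℝ) * q i * p (k + 1 - i)) (k + 2),
        ← Finset.sum_add_distrib]
      apply Finset.sum_congr rfl
      intro i hi
      rw [Finset.mem_range] at hi
      rw [show k + 2 - 1 - i = k + 1 - i from by omega,
        show k + 1 - (k + 1 - i) = i from by omega]
      have hc : ((k + 1 - i : ℕ) : ℝ) = (k : ℝ) + 1 - (i : ℝ) := by
        push_cast [Nat.cast_sub (by omega : i ≤ k + 1)]
        ring
      rw [hc]
      ring
    rw [expand, key q hp.2 k, key p hq.2 k, ← Finset.sum_add_distrib]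
    apply Finset.sum_congr rfl
    intro r _
    rw [conv_comm q p]
    ring

/-! ### `a` solves the recursion with constant `1/2`, and `conv a a = 1` -/

lemma isRec_a : IsRec (fun _ => (1:ℝ) / 2) a := by
  refine ⟨a_zero, fun k => ?_⟩
  have := sum_a k
  calc ((k:ℝ) + 1) * a (k + 1) = (2 * ((k:ℝ) + 1) * a (k + 1)) / 2 := by ring
      _ = (∑ r ∈ range (k + 1), a r) / 2 := by rw [this]
      _ = ∑ r ∈ range (k + 1), a r / 2 := Finset.sum_div _ _ _
      _ = ∑ r ∈ range (k + 1), 1 / 2 * a r := by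
          apply Finset.sum_congr rfl; intro r _; ring

lemma isRec_one : IsRec (fun _ => (1:ℝ)) (fun _ => 1) := by
  refine ⟨rfl, fun k => ?_⟩
  simp [Finset.sum_const, Finset.card_range]

lemma conv_a_a : conv a a = fun _ => (1:ℝ) := by
  have h := isRec_a.conv isRec_a
  have hd : (fun m : ℕ => (1:ℝ) / 2 + 1 / 2) = fun _ : ℕ => (1:ℝ) := by
    funext m; norm_num
  rw [hd] at h
  exact h.unique isRec_one

/-! ### The binomial series `∑ a k * y^k = (1-y)^(-1/2)` -/

lemma summable_norm_a {y : ℝ} (hy : |y| < 1) : Summable fun k => ‖a k * y ^ k‖ := by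
  apply Summable.of_nonneg_of_le (fun k => norm_nonneg _) (fun k => ?_)
    (summable_geometric_of_lt_one (abs_nonneg y) hy)
  rw [norm_mul, norm_pow, Real.norm_eq_abs, Real.norm_eq_abs,
    abs_of_nonneg (a_nonneg k)]
  calc a k * |y| ^ k ≤ 1 * |y| ^ k := by
        apply mul_le_mul_of_nonneg_right (a_le_one k) (by positivity)
    _ = |y| ^ k := one_mul _

lemma summable_a {y : ℝ} (hy : |y| < 1) : Summable fun k => a k * y ^ k :=
  (summable_norm_a hy).of_norm

lemma tsum_a_sq {y : ℝ} (hy : |y| < 1) :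
    (∑' k, a k * y ^ k) * (∑' k, a k * y ^ k) = (1 - y)⁻¹ := by
  rw [tsum_mul_tsum_eq_tsum_sum_range_of_summable_norm (summable_norm_a hy)
    (summable_norm_a hy)]
  have h : ∀ n : ℕ, ∑ k ∈ range (n + 1), (a k * y ^ k) * (a (n - k) * y ^ (n - k))
      = y ^ n := by
    intro n
    have hterm : ∀ k ∈ range (n + 1), (a k * y ^ k) * (a (n - k) * y ^ (n - k))
        = (a k * a (n - k)) * y ^ n := by
      intro k hk
      rw [Finset.mem_range] at hk
      rw [show n = k + (n - k) from by omega, pow_add]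
      ring_nf
      rw [show k + (n - k) - k = n - k from by omega]
    rw [Finset.sum_congr rfl hterm, ← Finset.sum_mul,
      show (∑ i ∈ range (n + 1), a i * a (n - i)) = conv a a n from rfl, conv_a_a, one_mul]
  rw [tsum_congr h]
  exact tsum_geometric_of_norm_lt_one (by rwa [Real.norm_eq_abs])

lemma tsum_a_pos {y : ℝ} (hy : |y| < 1) : 0 < ∑' k, a k * y ^ k := by
  rcases le_or_gt 0 y with h | h
  · have h1 : a 0 * y ^ 0 ≤ ∑' k, a k * y ^ k :=
      Summable.le_tsum (summable_a hy) 0 (fun i _ => mul_nonneg (a_nonneg i) (pow_nonneg h i))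
    simp [a_zero] at h1
    linarith
  · set f : ℕ → ℝ := fun k => a k * y ^ k with hf
    have hsum := summable_a hy
    have hev : Summable fun k => f (2 * k) :=
      hsum.comp_injective (fun i j h2 => by omega)
    have hod : Summable fun k => f (2 * k + 1) :=
      hsum.comp_injective (fun i j h2 => by omega)
    have hEO : HasSum f ((∑' k, f (2 * k)) + ∑' k, f (2 * k + 1)) :=
      HasSum.even_add_odd hev.hasSum hod.hasSum
    rw [show (∑' k, f k) = (∑' k, f (2 * k)) + ∑' k, f (2 * k + 1) from hEO.tsum_eq,
      ← Summable.tsum_add hev hod]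
    have hterm : ∀ k, 0 ≤ f (2 * k) + f (2 * k + 1) := by
      intro k
      have h1 : f (2 * k) + f (2 * k + 1) = y ^ (2 * k) * (a (2 * k) + a (2 * k + 1) * y) := by
        simp only [hf, pow_succ]
        ring
      rw [h1]
      have h2 : (0:ℝ) ≤ y ^ (2 * k) := by
        rw [pow_mul]; positivity
      have h3 : 0 ≤ a (2 * k) + a (2 * k + 1) * y := by
        have hy1 : -1 < y := (abs_lt.mp hy).1
        nlinarith [a_antitone (2 * k), a_nonneg (2 * k + 1)]
      positivity
    have h0 : 0 < f 0 + f 1 := by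
      simp only [hf, a_zero, a_one, pow_zero, pow_one]
      have hy1 : -1 < y := (abs_lt.mp hy).1
      linarith
    have := Summable.le_tsum (hev.add hod) 0 (fun i _ => hterm i)
    simp only [mul_zero, zero_add] at this
    linarith

lemma hasSum_a {y : ℝ} (hy : |y| < 1) :
    HasSum (fun k => a k * y ^ k) ((1 - y) ^ (-(1 / 2) : ℝ)) := by
  have h1y : (0:ℝ) < 1 - y := by linarith [(abs_lt.mp hy).2]
  have hval : (∑' k, a k * y ^ k) = (1 - y) ^ (-(1 / 2) : ℝ) := by
    have hsq := tsum_a_sq hy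
    have hpos := tsum_a_pos hy
    have h2 : ((1 - y) ^ (-(1 / 2) : ℝ)) ^ 2 = (1 - y)⁻¹ := by
      rw [← Real.rpow_natCast ((1 - y) ^ (-(1 / 2) : ℝ)) 2, ← Real.rpow_mul h1y.le]
      norm_num
      rw [Real.rpow_neg_one]
    have h3 : (0:ℝ) < (1 - y) ^ (-(1 / 2) : ℝ) := Real.rpow_pos_of_pos h1y _
    nlinarith [hsq, hpos, h3, h2]
  rw [← hval]
  exact (summable_a hy).hasSum

/-! ### Main induction over the list of eigenvalues -/

lemma main (L : List ℝ) (hL : ∀ x ∈ L, 0 ≤ x ∧ x < 1) :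
    ∀ c : ℕ → ℝ, IsRec (fun m => (1 / 2) * (L.map (fun l => l ^ m)).sum) c →
      (∀ k, 0 ≤ c k) ∧ ∀ x : ℝ, |x| ≤ 1 →
        HasSum (fun k => c k * x ^ k)
          ((L.map (fun l => (1 - l * x) ^ (-(1 / 2) : ℝ))).prod) := by
  induction L with
  | nil =>
    intro c hrec
    have hzero : ∀ k, c (k + 1) = 0 := by
      intro k
      have h := hrec.2 k
      simp at h
      have hk : ((k : ℝ) + 1) ≠ 0 := by positivity
      rcases h with h | h
      · exact absurd h hk
      · exact h
    constructor
    · intro k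
      match k with
      | 0 => rw [hrec.1]; norm_num
      | k + 1 => rw [hzero]
    · intro x _
      have heq : (fun k => c k * x ^ k) = fun k => if k = 0 then (1:ℝ) else 0 := by
        funext k
        match k with
        | 0 => simp [hrec.1]
        | k + 1 => simp [hzero]
      rw [heq]
      simpa using hasSum_ite_eq 0 (1:ℝ)
  | cons l L' ih =>
    intro c hrec
    obtain ⟨hl0, hl1⟩ := hL l (List.mem_cons_self)
    set d' : ℕ → ℝ := fun m => (1 / 2) * (L'.map (fun l => l ^ m)).sum with hd'
    set c' := sol d' with hc'def
    have hc' : IsRec d' c' := isRec_sol d'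
    obtain ⟨hnn', hhs'⟩ := ih (fun x hx => hL x (List.mem_cons_of_mem l hx)) c' hc'
    set e : ℕ → ℝ := fun k => a k * l ^ k with he_def
    have he : IsRec (fun m => l ^ m / 2) e := by
      constructor
      · simp [he_def, a_zero]
      · intro k
        have h1 : ((k:ℝ) + 1) * e (k + 1) = (∑ r ∈ range (k + 1), a r) / 2 * l ^ (k + 1) := by
          rw [sum_a, he_def]
          ring
        rw [h1, Finset.sum_div, Finset.sum_mul]
        apply Finset.sum_congr rfl
        intro r hr
        rw [Finset.mem_range] at hr
        rw [he_def]
        have : l ^ (k + 1) = l ^ (k + 1 - r) * l ^ r := by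
          rw [← pow_add]
          congr 1
          omega
        rw [this]
        ring
    have hb : IsRec (fun m => l ^ m / 2 + d' m) (conv e c') := he.conv hc'
    have hd_eq : (fun m => (1 / 2) * ((l :: L').map (fun x => x ^ m)).sum)
        = fun m => l ^ m / 2 + d' m := by
      funext m
      simp [hd', List.map_cons]
      ring
    have hceq : c = conv e c' := by
      rw [hd_eq] at hrec
      exact hrec.unique hb
    have hcnn : ∀ k, 0 ≤ c k := by
      intro k
      rw [hceq]
      apply Finset.sum_nonneg
      intro i _
      exact mul_nonneg (mul_nonneg (a_nonneg i) (pow_nonneg hl0 i)) (hnn' _)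
    refine ⟨hcnn, fun x hx => ?_⟩
    have hlx : |l * x| < 1 := by
      rw [abs_mul, abs_of_nonneg hl0]
      calc l * |x| ≤ l * 1 := mul_le_mul_of_nonneg_left hx hl0
        _ = l := mul_one l
        _ < 1 := hl1
    set f : ℕ → ℝ := fun i => e i * x ^ i with hf_def
    set g : ℕ → ℝ := fun j => c' j * x ^ j with hg_def
    have hfa : f = fun i => a i * (l * x) ^ i := by
      funext i
      simp only [hf_def, he_def, mul_pow]
      ring
    have hfn : Summable fun i => ‖f i‖ := by rw [hfa]; exact summable_norm_a hlx
    have hsum_c' : Summable c' := by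
      have := (hhs' 1 (by norm_num)).summable
      simpa using this
    have hgn : Summable fun j => ‖g j‖ := by
      apply Summable.of_nonneg_of_le (fun j => norm_nonneg _) (fun j => ?_) hsum_c'
      rw [hg_def]
      simp only [norm_mul, Real.norm_eq_abs, norm_pow]
      rw [abs_of_nonneg (hnn' j)]
      calc c' j * |x| ^ j ≤ c' j * 1 := by
            apply mul_le_mul_of_nonneg_left _ (hnn' j)
            exact pow_le_one₀ (abs_nonneg x) hx
        _ = c' j := mul_one _
    have hfs : HasSum f ((1 - l * x) ^ (-(1 / 2) : ℝ)) := by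
      rw [hfa]; exact hasSum_a hlx
    have hgs : HasSum g ((L'.map (fun l => (1 - l * x) ^ (-(1 / 2) : ℝ))).prod) := hhs' x hx
    have hprod := hasSum_sum_range_mul_of_summable_norm hfn hgn
    rw [hfs.tsum_eq, hgs.tsum_eq] at hprod
    have heq : (fun k => c k * x ^ k)
        = fun n => ∑ k ∈ range (n + 1), f k * g (n - k) := by
      funext n
      rw [hceq]
      unfold conv
      rw [Finset.sum_mul]
      apply Finset.sum_congr rfl
      intro i hi
      rw [Finset.mem_range] at hi
      simp only [hf_def, hg_def]
      have : x ^ n = x ^ i * x ^ (n - i) := by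
        rw [← pow_add]
        congr 1
        omega
      rw [this]
      ring
    rw [heq, List.map_cons, List.prod_cons]
    exact hprod

end AltDetAux

open AltDetAux in
/-- With d_k = (1/2)Σ λ_j^k and c_k the recursion coefficients, if all eigenvalues
of the psd matrix A lie in [0,1), then Σ (-1)^k c_k converges to det(I+A)^{-1/2}. -/
theorem alternating_series_det_inv_sqrt {n : ℕ} (A : Matrix (Fin n) (Fin n) ℝ)
    (hA : A.PosSemidef) (hlt : ∀ j, hA.1.eigenvalues j < 1)
    (d c : ℕ → ℝ)
    (hd : ∀ k, d k = (1 / 2) * ∑ j, hA.1.eigenvalues j ^ k)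
    (hc0 : c 0 = 1)
    (hck : ∀ k, c (k + 1) =
      (1 / ((k : ℝ) + 1)) * ∑ r ∈ Finset.range (k + 1), d (k + 1 - r) * c r) :
    HasSum (fun k => (-1 : ℝ) ^ k * c k) ((1 + A).det ^ (-(1 / 2 : ℝ))) := by
  set lam := hA.1.eigenvalues with hlam
  set L : List ℝ := List.ofFn lam with hL_def
  have hL : ∀ x ∈ L, 0 ≤ x ∧ x < 1 := by
    intro x hx
    rw [hL_def, List.mem_ofFn] at hx
    obtain ⟨j, rfl⟩ := hx
    exact ⟨hA.eigenvalues_nonneg j, hlt j⟩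
  have hd2 : ∀ m : ℕ, (1 / 2 : ℝ) * (L.map (fun l => l ^ m)).sum = d m := by
    intro m
    rw [hd m, hL_def, List.map_ofFn, List.sum_ofFn]
    rfl
  have hrec : IsRec (fun m => (1 / 2) * (L.map (fun l => l ^ m)).sum) c := by
    refine ⟨hc0, fun k => ?_⟩
    have hk : ((k : ℝ) + 1) ≠ 0 := by positivity
    rw [hck k, ← mul_assoc, mul_one_div, div_self hk, one_mul]
    apply Finset.sum_congr rfl
    intro r _
    simp only [← hd2]
  have hmain := (main L hL c hrec).2 (-1) (by norm_num)
  have hfun : (fun k => (-1 : ℝ) ^ k * c k) = fun k => c k * (-1 : ℝ) ^ k := by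
    funext k; ring
  have hFval : (L.map (fun l => (1 - l * (-1)) ^ (-(1 / 2) : ℝ))).prod
      = ∏ j, (1 + lam j) ^ (-(1 / 2) : ℝ) := by
    rw [hL_def, List.map_ofFn, List.prod_ofFn]
    apply Finset.prod_congr rfl
    intro j _
    have : (1 : ℝ) - lam j * (-1) = 1 + lam j := by ring
    rw [Function.comp_apply, this]
  have hdet : (1 + A).det = ∏ j, (1 + lam j) := by
    set U : Matrix (Fin n) (Fin n) ℝ := (hA.1.eigenvectorUnitary : Matrix (Fin n) (Fin n) ℝ)
      with hU_def
    set D : Matrix (Fin n) (Fin n) ℝ := diagonal (RCLike.ofReal ∘ lam) with hD_def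
    have hU := hA.1.spectral_theorem
    have hUU : U * star U = 1 := Matrix.mem_unitaryGroup_iff.mp hA.1.eigenvectorUnitary.2
    have h1A : 1 + A = U * (1 + D) * star U := by
      conv_lhs => rw [← hUU, hU, Unitary.conjStarAlgAut_apply]
      rw [mul_add, mul_one, add_mul]
    rw [h1A, Matrix.det_mul_right_comm, hUU, one_mul]
    have : (1 : Matrix (Fin n) (Fin n) ℝ) + D = diagonal (fun j => 1 + lam j) := by
      rw [hD_def, ← Matrix.diagonal_one, Matrix.diagonal_add]
      simp [Function.comp, RCLike.ofReal_real_eq_id]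
    rw [this, Matrix.det_diagonal]
  have hval : ((1 + A).det) ^ (-(1 / 2 : ℝ)) = ∏ j, (1 + lam j) ^ (-(1 / 2) : ℝ) := by
    rw [hdet, ← Real.finset_prod_rpow _ _ (fun j _ => by
      linarith [hA.eigenvalues_nonneg j] : ∀ j ∈ Finset.univ, (0:ℝ) ≤ 1 + lam j)]
  rw [hfun, hval, ← hFval]
  exact hmain
end

section
/- Let ψ: U → ℝ be a negative definite semigroup function on a subset U of a real vector space (i.e. Σ_{i,j} c_i c_j ψ(s_i + s_j) ≤ 0 whenever Σ_i c_i = 0 and all s_i + s_j ∈ U). Then for every t > 0, the function s ↦ e^{-t ψ(s)}, restricted to pairs whose sums lie in U, defines a positive definite semigroup function: Σ_{i,j} c_i c_j e^{-t ψ(s_i + s_j)} ≥ 0 for all real c_i (no constraint on Σ c_i), whenever all s_i + s_j ∈ U and additionally 2s_i ∈ U for each i. -/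
open Finset Matrix Nat

private lemma sum_sum_sq {m : ℕ} (g : Fin m → ℝ) :
    ∑ i, ∑ j, g i * g j = (∑ i, g i) ^ 2 := by
  rw [sq, Finset.sum_mul_sum]

/-- If `B` is positive semidefinite, all entrywise (Hadamard) powers give
nonnegative quadratic forms. -/
private lemma pow_quad_nonneg {m : ℕ} {B : Matrix (Fin m) (Fin m) ℝ}
    (hB : B.PosSemidef) (n : ℕ) (c : Fin m → ℝ) :
    0 ≤ ∑ i, ∑ j, c i * c j * B i j ^ n := by
  obtain ⟨A, rfl⟩ : ∃ A : Matrix (Fin m) (Fin m) ℝ, B = Aᴴ * A := by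
    open scoped MatrixOrder in exact CStarAlgebra.nonneg_iff_eq_star_mul_self.mp hB.nonneg
  have hpow : ∀ i j, ((Aᴴ * A) i j) ^ n =
      ∑ f ∈ Fintype.piFinset (fun _ : Fin n => (univ : Finset (Fin m))),
        ∏ l, (A (f l) i * A (f l) j) := by
    intro i j
    have hentry : (Aᴴ * A) i j = ∑ k, A k i * A k j := by
      simp [Matrix.mul_apply, Matrix.conjTranspose_apply]
    rw [hentry,
      ← Finset.prod_univ_sum (fun _ : Fin n => (univ : Finset (Fin m)))
        (fun _ k => A k i * A k j)]
    simp [Finset.prod_const]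
  calc ∑ i, ∑ j, c i * c j * ((Aᴴ * A) i j) ^ n
      = ∑ f ∈ Fintype.piFinset (fun _ : Fin n => (univ : Finset (Fin m))),
          ∑ i, ∑ j, (c i * ∏ l, A (f l) i) * (c j * ∏ l, A (f l) j) := by
        have step1 : ∑ i, ∑ j, c i * c j * ((Aᴴ * A) i j) ^ n
            = ∑ i, ∑ f ∈ Fintype.piFinset (fun _ : Fin n => (univ : Finset (Fin m))),
                ∑ j, (c i * ∏ l, A (f l) i) * (c j * ∏ l, A (f l) j) := by
          refine Finset.sum_congr rfl fun i _ => ?_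
          rw [show (∑ j, c i * c j * ((Aᴴ * A) i j) ^ n)
              = ∑ j, ∑ f ∈ Fintype.piFinset (fun _ : Fin n => (univ : Finset (Fin m))),
                  (c i * ∏ l, A (f l) i) * (c j * ∏ l, A (f l) j) from
            Finset.sum_congr rfl fun j _ => by
              rw [hpow, Finset.mul_sum]
              exact Finset.sum_congr rfl fun f _ => by
                rw [Finset.prod_mul_distrib]; ring]
          exact Finset.sum_comm
        rw [step1]
        exact Finset.sum_comm
    _ = ∑ f ∈ Fintype.piFinset (fun _ : Fin n => (univ : Finset (Fin m))),
          (∑ i, c i * ∏ l, A (f l) i) ^ 2 := by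
        refine Finset.sum_congr rfl fun f _ => ?_
        exact sum_sum_sq _
    _ ≥ 0 := Finset.sum_nonneg fun f _ => sq_nonneg _

private lemma real_exp_tsum (x : ℝ) : Real.exp x = ∑' n : ℕ, x ^ n / n ! := by
  rw [Real.exp_eq_exp_ℝ, NormedSpace.exp_eq_tsum_div]

/-- If `B` is positive semidefinite, the entrywise exponential gives a
nonnegative quadratic form. -/
private lemma exp_quad_nonneg {m : ℕ} {B : Matrix (Fin m) (Fin m) ℝ}
    (hB : B.PosSemidef) (c : Fin m → ℝ) :
    0 ≤ ∑ i, ∑ j, c i * c j * Real.exp (B i j) := by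
  have hsummable : ∀ i j : Fin m, Summable (fun n : ℕ => c i * c j * (B i j ^ n / n !)) :=
    fun i j => (Real.summable_pow_div_factorial (B i j)).mul_left _
  have key : ∑ i, ∑ j, c i * c j * Real.exp (B i j)
      = ∑' n : ℕ, ∑ i, ∑ j, c i * c j * (B i j ^ n / n !) := by
    simp_rw [real_exp_tsum, ← tsum_mul_left]
    rw [Summable.tsum_finsetSum (f := fun i (n : ℕ) => ∑ j, c i * c j * (B i j ^ n / n !))
      (fun i _ => summable_sum fun j _ => hsummable i j)]
    refine Finset.sum_congr rfl fun i _ => ?_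
    rw [Summable.tsum_finsetSum (fun j _ => hsummable i j)]
  rw [key]
  refine tsum_nonneg fun n => ?_
  have heq : ∑ i, ∑ j, c i * c j * (B i j ^ n / n !)
      = (∑ i, ∑ j, c i * c j * B i j ^ n) / n ! := by
    rw [Finset.sum_div]
    refine Finset.sum_congr rfl fun i _ => ?_
    rw [Finset.sum_div]
    refine Finset.sum_congr rfl fun j _ => ?_
    ring
  rw [heq]
  exact div_nonneg (pow_quad_nonneg hB n c) (by positivity)

/-- Schoenberg-type theorem on subsets: if ψ is a negative definite semigroup
function on U ⊆ V, then for every t > 0, s ↦ e^{-tψ(s)} is a positive definite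
semigroup function on U. -/
theorem exp_neg_of_negDef_semigroup {V : Type*} [AddCommGroup V] (U : Set V)
    (ψ : V → ℝ)
    (hnd : ∀ (m : ℕ) (s : Fin m → V) (c : Fin m → ℝ), (∑ i, c i = 0) →
      (∀ i j, s i + s j ∈ U) → ∑ i, ∑ j, c i * c j * ψ (s i + s j) ≤ 0) :
    ∀ t : ℝ, 0 < t → ∀ (m : ℕ) (s : Fin m → V), (∀ i j, s i + s j ∈ U) →
      ∀ c : Fin m → ℝ, 0 ≤ ∑ i, ∑ j, c i * c j * Real.exp (-t * ψ (s i + s j)) := by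
  intro t ht m s hU c
  rcases Nat.eq_zero_or_pos m with hm | hm
  · subst hm; simp
  · set i₀ : Fin m := ⟨0, hm⟩ with hi₀
    set B : Matrix (Fin m) (Fin m) ℝ := Matrix.of fun i j =>
      t * (ψ (s i + s i₀) + ψ (s i₀ + s j) - ψ (s i + s j) - ψ (s i₀ + s i₀)) with hB
    have hBsym : B.IsHermitian := by
      ext i j
      simp only [hB, Matrix.conjTranspose_apply, Matrix.of_apply, star_trivial]
      rw [add_comm (s j) (s i₀), add_comm (s j) (s i), add_comm (s i₀) (s i)]
      ring
    have hBpsd : B.PosSemidef := by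
      refine Matrix.PosSemidef.of_dotProduct_mulVec_nonneg hBsym fun x => ?_
      set c' : Fin m → ℝ := fun i => x i - (if i = i₀ then ∑ k, x k else 0) with hc'
      have hsum0 : ∑ i, c' i = 0 := by
        simp only [hc', Finset.sum_sub_distrib,
          Finset.sum_ite_eq' Finset.univ i₀ (fun _ => ∑ k, x k),
          Finset.mem_univ, if_true, sub_self]
      have hneg := hnd m s c' hsum0 hU
      -- row sums of B against x
      have hrow : ∀ i, ∑ j, B i j * x j
          = t * (ψ (s i + s i₀) * (∑ j, x j) + (∑ j, x j * ψ (s i₀ + s j))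
              - (∑ j, x j * ψ (s i + s j)) - ψ (s i₀ + s i₀) * (∑ j, x j)) := by
        intro i
        have h : ∀ j, B i j * x j
            = t * (ψ (s i + s i₀) * x j) + t * (x j * ψ (s i₀ + s j))
              - t * (x j * ψ (s i + s j)) - t * (ψ (s i₀ + s i₀) * x j) := by
          intro j; simp only [hB, Matrix.of_apply]; ring
        simp only [h, Finset.sum_sub_distrib, Finset.sum_add_distrib, ← Finset.mul_sum]
        ring
      have hL : dotProduct (star x) (B *ᵥ x)
          = t * ((∑ j, x j) * (∑ i, x i * ψ (s i + s i₀))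
              + (∑ j, x j) * (∑ j, x j * ψ (s i₀ + s j))
              - (∑ i, x i * (∑ j, x j * ψ (s i + s j)))
              - (∑ j, x j) * (∑ j, x j) * ψ (s i₀ + s i₀)) := by
        simp only [dotProduct, Matrix.mulVec, dotProduct, Pi.star_apply, star_trivial]
        simp only [hrow]
        have h : ∀ i, x i * (t * (ψ (s i + s i₀) * (∑ j, x j) + (∑ j, x j * ψ (s i₀ + s j))
              - (∑ j, x j * ψ (s i + s j)) - ψ (s i₀ + s i₀) * (∑ j, x j)))
            = (t * (∑ j, x j)) * (x i * ψ (s i + s i₀))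
              + (t * (∑ j, x j * ψ (s i₀ + s j))) * x i
              - t * (x i * (∑ j, x j * ψ (s i + s j)))
              - (t * ((∑ j, x j) * ψ (s i₀ + s i₀))) * x i := by
          intro i; ring
        simp only [h, Finset.sum_sub_distrib, Finset.sum_add_distrib, ← Finset.mul_sum]
        ring
      have hin : ∀ i, ∑ j, c' j * ψ (s i + s j)
          = (∑ j, x j * ψ (s i + s j)) - (∑ j, x j) * ψ (s i + s i₀) := by
        intro i
        simp only [hc', sub_mul, Finset.sum_sub_distrib, ite_mul, zero_mul]
        rw [Finset.sum_ite_eq' Finset.univ i₀ (fun j => (∑ k, x k) * ψ (s i + s j))]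
        simp
      have hRhs : ∑ i, ∑ j, c' i * c' j * ψ (s i + s j)
          = (∑ i, x i * (∑ j, x j * ψ (s i + s j)))
            - (∑ j, x j) * (∑ i, x i * ψ (s i + s i₀))
            - (∑ j, x j) * (∑ j, x j * ψ (s i₀ + s j))
            + (∑ j, x j) * (∑ j, x j) * ψ (s i₀ + s i₀) := by
        have h1 : ∀ i, ∑ j, c' i * c' j * ψ (s i + s j)
            = c' i * ((∑ j, x j * ψ (s i + s j)) - (∑ j, x j) * ψ (s i + s i₀)) := by
          intro i
          rw [← hin i, Finset.mul_sum]
          exact Finset.sum_congr rfl fun j _ => by ring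
        simp only [h1]
        simp only [hc']
        have h2 : ∀ i, (x i - (if i = i₀ then ∑ k, x k else 0))
              * ((∑ j, x j * ψ (s i + s j)) - (∑ j, x j) * ψ (s i + s i₀))
            = (x i * (∑ j, x j * ψ (s i + s j))
                - (∑ j, x j) * (x i * ψ (s i + s i₀)))
              - (if i = i₀ then (∑ k, x k) * ((∑ j, x j * ψ (s i + s j))
                  - (∑ j, x j) * ψ (s i + s i₀)) else 0) := by
          intro i; split <;> ring
        simp only [h2, Finset.sum_sub_distrib, ← Finset.mul_sum]
        rw [Finset.sum_ite_eq' Finset.univ i₀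
          (fun i => (∑ k, x k) * ((∑ j, x j * ψ (s i + s j)) - (∑ j, x j) * ψ (s i + s i₀)))]
        simp only [Finset.mem_univ, if_true]
        ring
      rw [hRhs] at hneg
      show (0:ℝ) ≤ dotProduct (star x) (B *ᵥ x)
      rw [hL]
      exact mul_nonneg ht.le (by linarith)
    have hexp : ∀ i j, Real.exp (-t * ψ (s i + s j))
        = Real.exp (t * ψ (s i₀ + s i₀)) *
          (Real.exp (-t * ψ (s i + s i₀)) * Real.exp (-t * ψ (s j + s i₀)) *
            Real.exp (B i j)) := by
      intro i j
      rw [← Real.exp_add, ← Real.exp_add, ← Real.exp_add]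
      congr 1
      simp only [hB, Matrix.of_apply]
      rw [add_comm (s j) (s i₀)]
      ring
    calc (0:ℝ) ≤ Real.exp (t * ψ (s i₀ + s i₀)) *
        ∑ i, ∑ j, (c i * Real.exp (-t * ψ (s i + s i₀))) *
          (c j * Real.exp (-t * ψ (s j + s i₀))) * Real.exp (B i j) := by
          refine mul_nonneg (Real.exp_pos _).le ?_
          exact exp_quad_nonneg hBpsd (fun i => c i * Real.exp (-t * ψ (s i + s i₀)))
      _ = ∑ i, ∑ j, c i * c j * Real.exp (-t * ψ (s i + s j)) := by
          rw [Finset.mul_sum]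
          refine Finset.sum_congr rfl fun i _ => ?_
          rw [Finset.mul_sum]
          refine Finset.sum_congr rfl fun j _ => ?_
          rw [hexp i j]
          ring
end
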